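/- arXiv:2309.13834 — 3 statements merged into one kernel-verified Lean document; each statement's English description precedes it below -/
import Mathlib

section
/- Let n : ℕ and let R : EuclideanSpace ℝ (Fin n) →L[ℝ] EuclideanSpace ℝ (Fin n) be a continuous linear map with operator norm ‖R‖ = 1. Then the following are equivalent: (i) for all h t : EuclideanSpace ℝ (Fin n) with ‖h‖ = 1, ‖t‖ = 1 and h ≠ t, one has ⟪h, R t⟫ < ⟪h, R h⟫; (ii) R is the identity map. In other words, the identity is the unique norm-one operator satisfying (i), so UniBi models the law of identity. -/
open scoped RealInnerProductSpace

private lemma unibi_const_aux {E : Type*} [NormedAddCommGroup E] [InnerProductSpace ℝ E]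
    (A : E →L[ℝ] E) (key : ∀ h : E, ‖h‖ = 1 → A h = ‖A h‖ • h)
    (h k : E) (hh : ‖h‖ = 1) (hk : ‖k‖ = 1) : ‖A h‖ = ‖A k‖ := by
  have hne : h ≠ 0 := by intro e; rw [e] at hh; simp at hh
  have kne : k ≠ 0 := by intro e; rw [e] at hk; simp at hk
  set a := ‖A h‖ with ha
  set b := ‖A k‖ with hb
  by_cases hkh : k = h
  · rw [ha, hb, hkh]
  by_cases hkn : k = -h
  · -- A k = A (-h) = -(a • h) = a • k, and A k = b • k
    have e1 : A k = a • k := by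
      rw [hkn, map_neg, key h hh, smul_neg]
    have e2 : A k = b • k := key k hk
    have : (a - b) • k = 0 := by rw [sub_smul, e1.symm.trans e2]; abel
    rcases smul_eq_zero.mp this with h1 | h1
    · linarith [sub_eq_zero.mp (by linarith [h1] : a - b = 0)]
    · exact absurd h1 kne
  · -- h, k "independent" case
    have hsum : h + k ≠ 0 := fun e => hkn (eq_neg_of_add_eq_zero_right e)
    set u := ‖h + k‖⁻¹ • (h + k) with hu
    have hnu : ‖u‖ = 1 := by
      rw [hu, norm_smul, norm_inv, norm_norm, inv_mul_cancel₀ (norm_ne_zero_iff.mpr hsum)]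
    set c := ‖A u‖ with hc
    have eu : A (h + k) = c • (h + k) := by
      have h1 : A u = c • u := key u hnu
      have h2 : h + k = ‖h + k‖ • u := by
        rw [hu, smul_smul, mul_inv_cancel₀ (norm_ne_zero_iff.mpr hsum), one_smul]
      rw [h2, map_smul, h1, smul_comm]
    have eab : a • h + b • k = c • h + c • k := by
      have := eu
      rw [map_add, key h hh, key k hk, smul_add] at this
      exact this
    have ekey : (a - c) • h = (c - b) • k := by
      rw [sub_smul, sub_smul]
      linear_combination (norm := abel) eab
    by_cases hac : a = c
    · -- then (c - b) • k = 0
      have : (c - b) • k = 0 := by rw [← ekey, hac, sub_self, zero_smul]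
      rcases smul_eq_zero.mp this with h1 | h1
      · have : c = b := sub_eq_zero.mp h1
        rw [hac, this]
      · exact absurd h1 kne
    · exfalso
      have hcoef : h = ((c - b) / (a - c)) • k := by
        have : (a - c)⁻¹ • ((a - c) • h) = (a - c)⁻¹ • ((c - b) • k) := by rw [ekey]
        rw [smul_smul, smul_smul, inv_mul_cancel₀ (sub_ne_zero.mpr hac), one_smul] at this
        rw [this, div_eq_inv_mul]
      have habs : |(c - b) / (a - c)| = 1 := by
        have := congrArg norm hcoef
        rw [norm_smul, hk, mul_one, hh, Real.norm_eq_abs] at this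
        exact this.symm
      rcases abs_eq (by norm_num : (0:ℝ) ≤ 1) |>.mp habs with h1 | h1
      · exact hkh (by rw [hcoef, h1, one_smul])
      · exact hkn (by rw [hcoef, h1, neg_one_smul, neg_neg])

/-- The identity is the unique operator of operator norm one satisfying the
identity-modeling property: UniBi models the law of identity. -/
theorem unibi_models_law_of_identity (n : ℕ)
    (R : EuclideanSpace ℝ (Fin n) →L[ℝ] EuclideanSpace ℝ (Fin n)) (hR : ‖R‖ = 1) :
    (∀ h t : EuclideanSpace ℝ (Fin n), ‖h‖ = 1 → ‖t‖ = 1 → h ≠ t → ⟪h, R t⟫ < ⟪h, R h⟫) ↔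
      R = ContinuousLinearMap.id ℝ (EuclideanSpace ℝ (Fin n)) := by
  -- first, n ≠ 0
  rcases Nat.eq_zero_or_pos n with hn | hn
  · exfalso
    subst hn
    have : R = 0 := ContinuousLinearMap.ext fun x => Subsingleton.elim _ _
    rw [this, norm_zero] at hR
    exact zero_ne_one hR
  constructor
  · intro H
    set A := ContinuousLinearMap.adjoint R with hA
    have key : ∀ h : EuclideanSpace ℝ (Fin n), ‖h‖ = 1 → A h = ‖A h‖ • h := by
      intro h hh
      by_cases h0 : A h = 0
      · rw [h0, norm_zero, zero_smul]
      · set t := ‖A h‖⁻¹ • A h with htdef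
        have hAh : (0:ℝ) < ‖A h‖ := norm_pos_iff.mpr h0
        have hnt : ‖t‖ = 1 := by
          rw [htdef, norm_smul, norm_inv, norm_norm, inv_mul_cancel₀ (ne_of_gt hAh)]
        by_cases hth : t = h
        · have h1 : ‖A h‖ • t = A h := by
            rw [htdef, smul_smul, mul_inv_cancel₀ (ne_of_gt hAh), one_smul]
          calc A h = ‖A h‖ • t := h1.symm
            _ = ‖A h‖ • h := by rw [hth]
        · exfalso
          have h1 := H h t hh hnt (fun e => hth e.symm)
          have e1 : ⟪h, R t⟫ = ‖A h‖ := by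
            rw [← ContinuousLinearMap.adjoint_inner_left R t h, ← hA, htdef,
              real_inner_smul_right, real_inner_self_eq_norm_sq]
            field_simp
          have e2 : ⟪h, R h⟫ ≤ ‖A h‖ := by
            calc ⟪h, R h⟫ = ⟪A h, h⟫ := by
                  rw [← ContinuousLinearMap.adjoint_inner_left R h h, ← hA]
              _ ≤ ‖A h‖ * ‖h‖ := real_inner_le_norm _ _
              _ = ‖A h‖ := by rw [hh, mul_one]
          rw [e1] at h1
          linarith
    -- the scalar is constant on the unit sphere
    set e : EuclideanSpace ℝ (Fin n) := EuclideanSpace.single ⟨0, hn⟩ (1:ℝ) with hedef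
    have he : ‖e‖ = 1 := by rw [hedef, EuclideanSpace.norm_single]; norm_num
    set c := ‖A e‖ with hcc
    have hall : ∀ x : EuclideanSpace ℝ (Fin n), A x = c • x := by
      intro x
      by_cases hx : x = 0
      · rw [hx, map_zero, smul_zero]
      · have hxn : (0:ℝ) < ‖x‖ := norm_pos_iff.mpr hx
        set h := ‖x‖⁻¹ • x with hhdef
        have hh : ‖h‖ = 1 := by
          rw [hhdef, norm_smul, norm_inv, norm_norm, inv_mul_cancel₀ (ne_of_gt hxn)]
        have hconst : ‖A h‖ = c := unibi_const_aux A key h e hh he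
        have hx' : x = ‖x‖ • h := by
          rw [hhdef, smul_smul, mul_inv_cancel₀ (ne_of_gt hxn), one_smul]
        rw [hx', map_smul, key h hh, hconst, smul_comm]
    -- compute the norm of A and deduce c = 1
    have hAnorm : ‖A‖ = 1 := by
      rw [hA]
      rw [LinearIsometryEquiv.norm_map ContinuousLinearMap.adjoint R]
      exact hR
    have hcnn : 0 ≤ c := norm_nonneg _
    have hc1 : c = 1 := by
      have h1 : ‖A e‖ = c := rfl
      have h2 : ‖A e‖ ≤ ‖A‖ * ‖e‖ := A.le_opNorm e
      have h3 : ‖A e‖ = c * ‖e‖ := by rw [hall e, norm_smul, Real.norm_eq_abs, abs_of_nonneg hcnn]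
      -- c ≤ 1 from h2; c ≥ 1: ‖A‖ ≤ c since ‖A x‖ = c ‖x‖
      have hle : ‖A‖ ≤ c := by
        apply ContinuousLinearMap.opNorm_le_bound A hcnn
        intro x
        rw [hall x, norm_smul, Real.norm_eq_abs, abs_of_nonneg hcnn]
      have hge : c ≤ ‖A‖ := by
        rw [← h1]
        calc ‖A e‖ ≤ ‖A‖ * ‖e‖ := h2
          _ = ‖A‖ := by rw [he, mul_one]
      rw [hAnorm] at hle hge
      linarith
    have hAid : A = ContinuousLinearMap.id ℝ (EuclideanSpace ℝ (Fin n)) := by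
      ext x
      rw [hall x, hc1, one_smul]; rfl
    calc R = ContinuousLinearMap.adjoint (ContinuousLinearMap.adjoint R) :=
          (ContinuousLinearMap.adjoint_adjoint R).symm
      _ = ContinuousLinearMap.adjoint (ContinuousLinearMap.id ℝ (EuclideanSpace ℝ (Fin n))) := by
          rw [← hA, hAid]
      _ = ContinuousLinearMap.id ℝ (EuclideanSpace ℝ (Fin n)) := ContinuousLinearMap.adjoint_id
  · rintro rfl
    intro h t hh ht hne
    simp only [ContinuousLinearMap.id_apply]
    have h1 : ⟪h, t⟫ < 1 := (inner_lt_one_iff_real_of_norm_eq_one hh ht).mpr hne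
    have h2 : ⟪h, h⟫ = 1 := by
      rw [real_inner_self_eq_norm_sq, hh]; norm_num
    linarith
end

section
/- Let n : ℕ and let R : EuclideanSpace ℝ (Fin n) →L[ℝ] EuclideanSpace ℝ (Fin n) be a continuous linear map with operator norm ‖R‖ = 1 and R not equal to the identity map. Then there exist h t : EuclideanSpace ℝ (Fin n) with ‖h‖ = 1, ‖t‖ = 1, h ≠ t and ⟪h, R h⟫ ≤ ⟪h, R t⟫. (Any norm-one operator other than the identity fails to model the identity relation.) -/
open scoped RealInnerProductSpace

/-- Any norm-one operator other than the identity fails to model the identity relation. -/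
theorem non_identity_fails_identity (n : ℕ)
    (R : EuclideanSpace ℝ (Fin n) →L[ℝ] EuclideanSpace ℝ (Fin n)) (hR : ‖R‖ = 1)
    (hne : R ≠ ContinuousLinearMap.id ℝ (EuclideanSpace ℝ (Fin n))) :
    ∃ h t : EuclideanSpace ℝ (Fin n),
      ‖h‖ = 1 ∧ ‖t‖ = 1 ∧ h ≠ t ∧ ⟪h, R h⟫ ≤ ⟪h, R t⟫ := by
  classical
  set E := EuclideanSpace ℝ (Fin n)
  set A : E →L[ℝ] E := ContinuousLinearMap.adjoint R with hAdef
  have key : ∀ x y : E, ⟪A x, y⟫ = ⟪x, R y⟫ := fun x y =>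
    ContinuousLinearMap.adjoint_inner_left R y x
  by_cases hex : ∃ h : E, ‖h‖ = 1 ∧ A h ≠ ‖A h‖ • h
  · obtain ⟨h, hh, hAh⟩ := hex
    have hA0 : A h ≠ 0 := by
      intro hz
      apply hAh
      rw [hz]
      simp
    have hnrm : ‖A h‖ ≠ 0 := norm_ne_zero_iff.mpr hA0
    refine ⟨h, ‖A h‖⁻¹ • A h, hh, ?_, ?_, ?_⟩
    · rw [norm_smul, norm_inv, norm_norm, inv_mul_cancel₀ hnrm]
    · intro heq
      apply hAh
      nth_rewrite 3 [heq]
      rw [smul_smul, mul_inv_cancel₀ hnrm, one_smul]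
    · rw [← key h h, ← key h (‖A h‖⁻¹ • A h), real_inner_smul_right,
        real_inner_self_eq_norm_sq]
      have h1 : ⟪A h, h⟫ ≤ ‖A h‖ := by
        calc ⟪A h, h⟫ ≤ ‖A h‖ * ‖h‖ := real_inner_le_norm _ _
        _ = ‖A h‖ := by rw [hh, mul_one]
      have h2 : ‖A h‖⁻¹ * ‖A h‖ ^ 2 = ‖A h‖ := by
        field_simp
      rw [h2]
      exact h1
  · push_neg at hex
    exfalso
    -- every unit vector is an eigenvector of A with eigenvalue its norm
    -- first get a unit vector
    rcases Nat.eq_zero_or_pos n with hn | hn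
    · subst hn
      have hsub : Subsingleton E := ⟨fun a b => by ext i; exact i.elim0⟩
      have hle : ‖R‖ ≤ 0 := R.opNorm_le_bound le_rfl fun x => by
        rw [Subsingleton.elim (R x) 0, norm_zero, zero_mul]
      rw [hR] at hle
      norm_num at hle
    apply hne
    -- unit vector u
    set u : E := EuclideanSpace.single (⟨0, hn⟩ : Fin n) (1 : ℝ) with hu
    have hu1 : ‖u‖ = 1 := by
      rw [hu, EuclideanSpace.norm_single]; norm_num
    set c : ℝ := ‖A u‖ with hc
    have hc0 : 0 ≤ c := norm_nonneg _
    -- constancy: all unit vectors get the same eigenvalue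
    have hconst : ∀ v : E, ‖v‖ = 1 → A v = c • v := by
      intro v hv
      by_cases hvu : v = u
      · rw [hvu]; exact hex u hu1
      by_cases hvu' : v = -u
      · have : ‖A v‖ = c := by rw [hvu']; simp [hc]
        rw [← this]; exact hex v hv
      · -- u, v not parallel
        have s1 : ⟪u, v⟫ < 1 :=
          (inner_lt_one_iff_real_of_norm_eq_one hu1 hv).mpr (fun h => hvu h.symm)
        have s2 : -1 < ⟪u, v⟫ := by
          have : ⟪u, -v⟫ < 1 := by
            refine (inner_lt_one_iff_real_of_norm_eq_one hu1 (by simpa using hv)).mpr ?_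
            intro h
            exact hvu' (by rw [h, neg_neg])
          have h2 : -⟪u, v⟫ < 1 := by rwa [inner_neg_right] at this
          linarith
        set s : ℝ := ⟪u, v⟫ with hs
        have hw0 : u + v ≠ 0 := by
          intro h
          apply hvu'
          have : v = -u := by linear_combination (norm := module) h
          exact this
        have hwn : ‖u + v‖ ≠ 0 := norm_ne_zero_iff.mpr hw0
        set w : E := ‖u + v‖⁻¹ • (u + v) with hw
        have hw1 : ‖w‖ = 1 := by
          rw [hw, norm_smul, norm_inv, norm_norm, inv_mul_cancel₀ hwn]
        have hAw := hex w hw1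
        set γ : ℝ := ‖A w‖ with hγ
        have hAuv : A (u + v) = γ • (u + v) := by
          have h1 : u + v = ‖u + v‖ • w := by
            rw [hw, smul_smul, mul_inv_cancel₀ hwn, one_smul]
          rw [h1, map_smul, hAw, smul_comm]
        have hb : A v = ‖A v‖ • v := hex v hv
        have ha : A u = c • u := hex u hu1
        set b : ℝ := ‖A v‖ with hbdef
        have heq : (c - γ) • u = (γ - b) • v := by
          have : A u + A v = γ • u + γ • v := by
            rw [← map_add, hAuv, smul_add]
          rw [ha, hb] at this
          linear_combination (norm := module) this
        have e1 : (c - γ) = (γ - b) * s := by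
          have := congrArg (fun x => ⟪u, x⟫) heq
          simpa [real_inner_smul_right, real_inner_self_eq_norm_sq, hu1, hs] using this
        have e2 : (c - γ) * s = (γ - b) := by
          have h2 := congrArg (fun x => ⟪v, x⟫) heq
          simp only [real_inner_smul_right, real_inner_self_eq_norm_sq, hv] at h2
          have h3 : ⟪v, u⟫ = s := by rw [hs]; exact real_inner_comm u v
          rw [h3] at h2
          linear_combination h2
        have key2 : (c - γ) * (1 - s ^ 2) = 0 := by linear_combination e1 - s * e2
        have hs2 : 0 < 1 - s ^ 2 := by nlinarith [s1, s2]
        have hcg0 : c - γ = 0 := by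
          rcases mul_eq_zero.mp key2 with h | h
          · exact h
          · linarith
        rw [hcg0, zero_mul] at e2
        rw [hb]
        congr 1
        linarith
    -- hence A = c • id on all vectors
    have hAall : ∀ x : E, A x = c • x := by
      intro x
      by_cases hx : x = 0
      · simp [hx]
      · have hxn : ‖x‖ ≠ 0 := norm_ne_zero_iff.mpr hx
        have : A (‖x‖⁻¹ • x) = c • (‖x‖⁻¹ • x) :=
          hconst _ (by rw [norm_smul, norm_inv, norm_norm, inv_mul_cancel₀ hxn])
        rw [map_smul, smul_smul] at this
        have h2 := congrArg (fun y => ‖x‖ • y) this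
        simp only [smul_smul] at h2
        rw [mul_inv_cancel₀ hxn, one_smul] at h2
        have h3 : ‖x‖ * (c * ‖x‖⁻¹) = c := by field_simp
        rw [h3] at h2
        exact h2
    -- hence R = c • id
    have hRall : ∀ y : E, R y = c • y := by
      intro y
      refine ext_inner_left ℝ (fun x => ?_)
      rw [← key x y, hAall x, real_inner_smul_left, real_inner_smul_right]
    -- c = 1
    have hc1 : c = 1 := by
      have hle : c ≤ 1 := by
        have := R.le_opNorm u
        rw [hRall u, norm_smul, hu1, mul_one, hR, mul_one, Real.norm_eq_abs,
          abs_of_nonneg hc0] at this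
        exact this
      have hge : 1 ≤ c := by
        have : ‖R‖ ≤ c := R.opNorm_le_bound hc0 (fun x => by
          rw [hRall x, norm_smul, Real.norm_eq_abs, abs_of_nonneg hc0])
        rwa [hR] at this
      linarith
    ext y
    rw [hRall y, hc1, one_smul]
    rfl
end

section
/- Let n : ℕ and let σ : Fin n → ℝ satisfy σ k ≥ 0 for all k, and suppose there exist indices i ≠ j with σ i > σ j. Let D = Matrix.diagonal σ. Then there exist h t : Fin n → ℝ with ∑ k, (h k)^2 = 1, ∑ k, (t k)^2 = 1, h ≠ t, and h ⬝ᵥ (D *ᵥ h) < h ⬝ᵥ (D *ᵥ t). (A nonnegative diagonal matrix with two distinct diagonal entries fails to model the identity relation on unit vectors.) -/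
open scoped Matrix

lemma sum_pair_support {n : ℕ} {i j : Fin n} (hij : i ≠ j) (f : Fin n → ℝ)
    (hf : ∀ k, k ≠ i → k ≠ j → f k = 0) : ∑ k, f k = f i + f j := by
  rw [← Finset.sum_pair hij]
  refine (Finset.sum_subset (Finset.subset_univ _) ?_).symm
  intro k _ hk
  simp only [Finset.mem_insert, Finset.mem_singleton, not_or] at hk
  exact hf k hk.1 hk.2

/-- A nonnegative diagonal matrix with two distinct diagonal entries fails to model
the identity relation on unit vectors. -/
theorem diagonal_distinct_singular_values_fails (n : ℕ) (σ : Fin n → ℝ)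
    (hσ : ∀ k, σ k ≥ 0) (i j : Fin n) (hij : i ≠ j) (hgt : σ i > σ j) :
    ∃ h t : Fin n → ℝ,
      (∑ k, (h k) ^ 2) = 1 ∧ (∑ k, (t k) ^ 2) = 1 ∧ h ≠ t ∧
      h ⬝ᵥ (Matrix.diagonal σ *ᵥ h) < h ⬝ᵥ (Matrix.diagonal σ *ᵥ t) := by
  have hi0 : 0 < σ i := lt_of_le_of_lt (hσ j) hgt
  set s : ℝ := Real.sqrt (σ i ^ 2 + σ j ^ 2) with hs_def
  have hsum_pos : 0 < σ i ^ 2 + σ j ^ 2 := by positivity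
  have hs_pos : 0 < s := Real.sqrt_pos.mpr hsum_pos
  have hs_sq : s ^ 2 = σ i ^ 2 + σ j ^ 2 := Real.sq_sqrt hsum_pos.le
  set c : ℝ := Real.sqrt 2 with hc_def
  have hc_pos : 0 < c := by positivity
  have hc_sq : c ^ 2 = 2 := Real.sq_sqrt (by norm_num)
  refine ⟨fun k => if k = i then 1 / c else if k = j then 1 / c else 0,
    fun k => if k = i then σ i / s else if k = j then σ j / s else 0, ?_, ?_, ?_, ?_⟩
  · rw [sum_pair_support hij]
    · simp only [if_pos rfl, if_neg hij.symm, if_true]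
      field_simp
      linarith [hc_sq]
    · intro k h1 h2; simp [h1, h2]
  · rw [sum_pair_support hij]
    · simp only [if_pos rfl, if_neg hij.symm, if_true]
      field_simp
      linarith [hs_sq]
    · intro k h1 h2; simp [h1, h2]
  · intro heq
    have h1 := congrFun heq i
    have h2 := congrFun heq j
    simp only [if_pos rfl, if_neg hij.symm, if_true] at h1 h2
    have : σ i = σ j := by
      have := h1.symm.trans h2
      field_simp at this
      exact this
    linarith
  · have key : ∀ (v : Fin n → ℝ),
        ((fun k => if k = i then 1 / c else if k = j then 1 / c else 0) ⬝ᵥ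
          (Matrix.diagonal σ *ᵥ v)) = (1 / c) * (σ i * v i) + (1 / c) * (σ j * v j) := by
      intro v
      unfold dotProduct
      rw [sum_pair_support hij]
      · simp [Matrix.mulVec_diagonal, if_neg hij.symm]
      · intro k h1 h2; simp [Matrix.mulVec_diagonal, h1, h2]
    have e1 : 1 / c * (σ i * (1 / c)) + 1 / c * (σ j * (1 / c)) = (σ i + σ j) / 2 := by
      have h0 : 1 / c * (σ i * (1 / c)) + 1 / c * (σ j * (1 / c))
          = (σ i + σ j) / (c * c) := by ring
      have hcc : c * c = 2 := by nlinarith [hc_sq]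
      rw [h0, hcc]
    have e2 : 1 / c * (σ i * (σ i / s)) + 1 / c * (σ j * (σ j / s)) = s / c := by
      have h0 : 1 / c * (σ i * (σ i / s)) + 1 / c * (σ j * (σ j / s))
          = (σ i ^ 2 + σ j ^ 2) / (c * s) := by ring
      have hss : s * s = σ i ^ 2 + σ j ^ 2 := by nlinarith [hs_sq]
      rw [h0, ← hss, mul_comm c s, ← div_div, mul_div_assoc, div_self hs_pos.ne', mul_one]
    have final : 1 / c * (σ i * (1 / c)) + 1 / c * (σ j * (1 / c))
        < 1 / c * (σ i * (σ i / s)) + 1 / c * (σ j * (σ j / s)) := by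
      rw [e1, e2, div_lt_div_iff₀ (by norm_num : (0:ℝ) < 2) hc_pos]
      have hsq : ((σ i + σ j) * c) ^ 2 < (s * 2) ^ 2 := by
        rw [mul_pow, mul_pow, hc_sq, hs_sq]
        nlinarith [sq_nonneg (σ i - σ j)]
      exact lt_of_pow_lt_pow_left₀ 2 (by positivity) hsq
    rw [key, key]
    simpa [if_neg hij.symm] using final
end
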